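/- For any instance (s, T_1,...,T_q) of Fixed-to-Single on G = (V,E) with q ≥ 2, the Some-to-All instance on G' = (V ∪ {s_1,...,s_q}, E) (the s_i being isolated new vertices) with candidate sets T_i' = T_i ∪ {s_i} for i ∈ [q] and T_{q+1}' = {s, s_1,...,s_q} has the same optimal value. -/

import Mathlib

open scoped Classical

section Aux
variable {V W : Type*}

lemma walk_map_reach {G : SimpleGraph V} {f : V ↪ W} :
    ∀ {x y : W} (_ : (G.map f).Walk x y) {u v : V}, x = f u → y = f v → G.Reachable u v := by
  intro x y p
  induction p with
  | nil => intro u v hx hy; subst hx; cases f.injective hy; exact SimpleGraph.Reachable.refl _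
  | @cons a b c h p ih =>
    intro u v hx hy
    obtain ⟨a', b', hab, ha, hb⟩ := (SimpleGraph.map_adj f G a b).mp h
    subst hx
    cases f.injective ha
    exact (hab.reachable).trans (ih hb.symm hy)

lemma reach_map_iff {G : SimpleGraph V} {f : V ↪ W} {u v : V} :
    (G.map f).Reachable (f u) (f v) ↔ G.Reachable u v := by
  constructor
  · rintro ⟨p⟩; exact walk_map_reach p rfl rfl
  · intro h
    exact h.map ⟨fun a => f a, fun h' => SimpleGraph.map_adj_apply.mpr h'⟩

lemma isolated_reach {H : SimpleGraph W} {a : W} (ha : ∀ y, ¬ H.Adj a y) {x : W}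
    (h : H.Reachable a x) : x = a := by
  obtain ⟨p⟩ := h
  cases p with
  | nil => rfl
  | cons h' _ => exact absurd h' (ha _)

lemma del_map (G : SimpleGraph V) (f : V ↪ W) (C : Set (Sym2 V)) :
    (G.map f).deleteEdges (Sym2.map f '' C) = (G.deleteEdges C).map f := by
  ext a b
  simp only [SimpleGraph.deleteEdges_adj, SimpleGraph.map_adj, Set.mem_image, not_exists]
  constructor
  · rintro ⟨⟨u, v, huv, rfl, rfl⟩, hne⟩
    refine ⟨u, v, ⟨huv, fun hc => hne s(u,v) ⟨hc, rfl⟩⟩, rfl, rfl⟩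
  · rintro ⟨u, v, ⟨huv, hc⟩, rfl, rfl⟩
    refine ⟨⟨u, v, huv, rfl, rfl⟩, ?_⟩
    rintro e ⟨he, hmap⟩
    have : e = s(u, v) := Sym2.map.injective f.injective hmap
    exact hc (this ▸ he)

end Aux

/-- The candidate sets of the Some-to-All instance built from a Fixed-to-Single
instance `(s, T)`: on `G' = (V ⊕ Fin q)`, set `T_i' = T_i ∪ {s_i}` for `i ∈ [q]`
(with `s_i = Sum.inr i` the new isolated vertices) and
`T_{q+1}' = {s, s_1, …, s_q}`. -/
def StASets {V : Type*} (s : V) {q : ℕ} (T : Fin q → Set V) :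
    Option (Fin q) → Set (V ⊕ Fin q) :=
  fun o => o.elim ({Sum.inl s} ∪ Set.range Sum.inr)
    (fun i => Sum.inl '' T i ∪ {Sum.inr i})

/-- For `q ≥ 2`, the Fixed-to-Single instance `(s, T_1, …, T_q)` on `G` and the
Some-to-All instance on `G'` (which is `G` together with isolated new vertices
`s_1, …, s_q`) with candidate sets `T_i' = T_i ∪ {s_i}` and
`T_{q+1}' = {s, s_1, …, s_q}` have the same optimal value. -/
theorem stmt11 {V : Type*} [Fintype V] [DecidableEq V] (G : SimpleGraph V)
    (q : ℕ) (hq : 2 ≤ q)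
    (w : Sym2 V → ℝ) (hw : ∀ e, 0 ≤ w e)
    (w' : Sym2 (V ⊕ Fin q) → ℝ)
    (hw' : ∀ u v : V, w' s(Sum.inl u, Sum.inl v) = w s(u, v))
    (s : V) (T : Fin q → Set V) :
    sInf {x : ℝ | ∃ C : Finset (Sym2 V), ↑C ⊆ G.edgeSet ∧
        (∀ i, ∃ t ∈ T i, ¬ (G.deleteEdges ↑C).Reachable s t) ∧
        ∑ e ∈ C, w e = x}
    = sInf {x : ℝ | ∃ C : Finset (Sym2 (V ⊕ Fin q)),
        ↑C ⊆ (G.map (⟨Sum.inl, Sum.inl_injective⟩ : V ↪ V ⊕ Fin q)).edgeSet ∧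
        (∀ i j : Option (Fin q), i ≠ j → ∃ u ∈ StASets s T i, ∀ v ∈ StASets s T j,
          ¬ ((G.map (⟨Sum.inl, Sum.inl_injective⟩ : V ↪ V ⊕ Fin q)).deleteEdges ↑C).Reachable u v) ∧
        ∑ e ∈ C, w' e = x} := by
  set f : V ↪ V ⊕ Fin q := ⟨Sum.inl, Sum.inl_injective⟩ with hf
  have hfa : ∀ a : V, f a = Sum.inl a := fun a => rfl
  have hiso : ∀ (D : Set (Sym2 (V ⊕ Fin q))) (i : Fin q) (y : V ⊕ Fin q),
      ¬ ((G.map f).deleteEdges D).Adj (Sum.inr i) y := by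
    rintro D i y h
    obtain ⟨u, v, -, hu, -⟩ := (SimpleGraph.map_adj f G _ _).mp
      (SimpleGraph.deleteEdges_adj.mp h).1
    exact (by simpa [hfa] using hu)
  have hisoR : ∀ (D : Set (Sym2 (V ⊕ Fin q))) (i : Fin q) (y : V ⊕ Fin q),
      ((G.map f).deleteEdges D).Reachable (Sum.inr i) y → y = Sum.inr i :=
    fun D i y h => isolated_reach (hiso D i) h
  congr 1
  ext x
  simp only [Set.mem_setOf_eq]
  constructor
  · rintro ⟨C, hC, hsep, rfl⟩
    have hG' : (G.map f).deleteEdges ↑(C.image (Sym2.map f)) = (G.deleteEdges ↑C).map f := by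
      rw [Finset.coe_image]; exact del_map G f ↑C
    refine ⟨C.image (Sym2.map f), ?_, ?_, ?_⟩
    · intro e' he'
      rw [Finset.coe_image] at he'
      obtain ⟨e, he, rfl⟩ := he'
      have hee := hC he
      induction e with
      | _ u v =>
        rw [Sym2.map_pair_eq]
        exact (SimpleGraph.mem_edgeSet _).mpr
          (SimpleGraph.map_adj_apply.mpr ((SimpleGraph.mem_edgeSet _).mp hee))
    · intro i j hij
      match i, j with
      | none, none => exact absurd rfl hij
      | some a, some b =>
        refine ⟨Sum.inr a, by simp [StASets], ?_⟩
        rintro v hv hr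
        have hva := hisoR _ a v hr
        subst hva
        simp only [StASets, Option.elim, Set.mem_union, Set.mem_image,
          Set.mem_singleton_iff] at hv
        rcases hv with ⟨t, -, ht⟩ | hv
        · exact Sum.inl_ne_inr ht
        · exact hij (by rw [Sum.inr.injEq] at hv; rw [hv])
      | some a, none =>
        obtain ⟨t, ht, hnr⟩ := hsep a
        refine ⟨Sum.inl t, show _ ∈ Sum.inl '' T a ∪ {Sum.inr a} from Or.inl ⟨t, ht, rfl⟩, ?_⟩
        intro v hv hr
        simp only [StASets, Option.elim, Set.mem_union, Set.mem_singleton_iff,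
          Set.mem_range] at hv
        rcases hv with rfl | ⟨k, rfl⟩
        · rw [hG'] at hr
          exact hnr ((reach_map_iff (f := f)).mp hr).symm
        · exact Sum.inl_ne_inr (hisoR _ k _ hr.symm)
      | none, some b =>
        obtain ⟨a, hab⟩ : ∃ a : Fin q, a ≠ b := by
          haveI : Nontrivial (Fin q) := Fin.nontrivial_iff_two_le.mpr hq
          exact exists_ne b
        refine ⟨Sum.inr a, by simp [StASets], ?_⟩
        rintro v hv hr
        have hva := hisoR _ a v hr
        subst hva
        simp only [StASets, Option.elim, Set.mem_union, Set.mem_image,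
          Set.mem_singleton_iff] at hv
        rcases hv with ⟨t, -, ht⟩ | hv
        · exact Sum.inl_ne_inr ht
        · exact hab (by rwa [Sum.inr.injEq] at hv)
    · rw [Finset.sum_image (fun a _ b _ h => Sym2.map.injective f.injective h)]
      refine Finset.sum_congr rfl fun e _ => ?_
      induction e with
      | _ u v => rw [Sym2.map_pair_eq]; exact hw' u v
  · rintro ⟨C', hC', hsep, rfl⟩
    set proj : V ⊕ Fin q → V := Sum.elim id (fun _ => s) with hproj
    have hstruct : ∀ e' ∈ C', ∃ u v : V, G.Adj u v ∧ e' = s(Sum.inl u, Sum.inl v) := by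
      intro e'
      induction e' with
      | _ a b =>
        intro he'
        obtain ⟨u, v, huv, ha, hb⟩ := (SimpleGraph.map_adj f G a b).mp
          ((SimpleGraph.mem_edgeSet _).mp (hC' he'))
        exact ⟨u, v, huv, by rw [← ha, ← hb]; rfl⟩
    have hre : ∀ e' ∈ C', Sym2.map (f : V → V ⊕ Fin q) (Sym2.map proj e') = e' := by
      intro e' he'
      obtain ⟨u, v, -, rfl⟩ := hstruct e' he'
      simp [hproj, hfa]
    set C : Finset (Sym2 V) := C'.image (Sym2.map proj) with hCdef
    have hCC' : C.image (Sym2.map (f : V → V ⊕ Fin q)) = C' := by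
      rw [hCdef, Finset.image_image]
      exact (Finset.image_congr (fun e' he' => hre e' he')).trans Finset.image_id
    have hCC'coe : Sym2.map (f : V → V ⊕ Fin q) '' ↑C = (↑C' : Set (Sym2 (V ⊕ Fin q))) := by
      rw [← Finset.coe_image, hCC']
    refine ⟨C, ?_, ?_, ?_⟩
    · intro e he
      rw [hCdef, Finset.coe_image] at he
      obtain ⟨e', he', rfl⟩ := he
      obtain ⟨u, v, huv, rfl⟩ := hstruct e' he'
      simpa [hproj] using huv
    · intro i
      obtain ⟨u, hu, hall⟩ := hsep (some i) none (by simp)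
      simp only [StASets, Option.elim, Set.mem_union, Set.mem_image,
        Set.mem_singleton_iff] at hu
      rcases hu with ⟨t, ht, rfl⟩ | rfl
      · refine ⟨t, ht, fun hr => ?_⟩
        have hr' : ((G.deleteEdges ↑C).map f).Reachable (f t) (f s) :=
          reach_map_iff.mpr hr.symm
        rw [← del_map G f ↑C, hCC'coe] at hr'
        exact hall (Sum.inl s) (by simp [StASets]) hr'
      · exact absurd (SimpleGraph.Reachable.refl _)
          (hall (Sum.inr i) (by simp [StASets]))
    · rw [← hCC', Finset.sum_image (fun a _ b _ h => Sym2.map.injective f.injective h)]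
      refine Finset.sum_congr rfl fun e _ => ?_
      induction e with
      | _ u v => rw [Sym2.map_pair_eq]; exact (hw' u v).symm
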